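/- For n ≥ 0, T_{n+1}^{(r,k)}(x|λ) = (x-r) T_n^{(r,k)}(x|λ) - (rλ/(1-λ)) T_n^{(r+1,k)}(x|λ) - (1/(n+1)) Σ_{l=0}^{n+1} C(n+1,l) B_l [T_{n+1-l}^{(r,k)}(x|λ) - T_{n+1-l}^{(r,k-1)}(x|λ)], where B_l are the ordinary Bernoulli numbers. -/

import Mathlib

open PowerSeries Finset

/-- e^{xt} as a formal power series. -/
noncomputable def expX (x : ℂ) : PowerSeries ℂ := rescale x (exp ℂ)

/-- 1 - e^{-t} as a formal power series. -/
noncomputable def oneSubExpNeg : PowerSeries ℂ := 1 - rescale (-1) (exp ℂ)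

/-- Li_k(1-e^{-t}) = Σ_{m≥1} (1-e^{-t})^m / m^k as a formal power series. -/
noncomputable def polyLogC (k : ℤ) : PowerSeries ℂ :=
  mk fun n => ∑ m ∈ Finset.Icc 1 n, (coeff n (oneSubExpNeg ^ m)) * ((m : ℂ) ^ k)⁻¹

/-- integer power of a power series (inverse via `PowerSeries.inv`). -/
noncomputable def zpowS (f : PowerSeries ℂ) (r : ℤ) : PowerSeries ℂ :=
  f ^ r.toNat * (f⁻¹) ^ (-r).toNat

/-- (1-λ)/(e^t-λ). -/
noncomputable def feBase (l : ℂ) : PowerSeries ℂ :=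
  C (1 - l) * (exp ℂ - C l)⁻¹

/-- exponential generating function Σ f(n) t^n/n!. -/
noncomputable def GF (f : ℕ → ℂ) : PowerSeries ℂ := mk fun n => f n / n.factorial

/-- Stirling numbers of the second kind: (e^t-1)^m = m! Σ_l S2(l,m) t^l/l!. -/
noncomputable def S2 (n m : ℕ) : ℂ :=
  (n.factorial : ℂ) / (m.factorial : ℂ) * coeff n ((exp ℂ - 1) ^ m)

/-! ### Auxiliary lemmas -/

lemma EmE : rescale (-1 : ℂ) (exp ℂ) * exp ℂ = 1 := by
  have h := exp_mul_exp_eq_exp_add (-1 : ℂ) 1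
  simp only [rescale_one, RingHom.id_apply] at h
  rw [h]
  norm_num [rescale_zero]

lemma factkey (n : ℕ) : (1:ℂ)/((n+1).factorial : ℂ) * ((n:ℂ)+1) = 1/(n.factorial : ℂ) := by
  have h1 : ((n:ℂ)+1) ≠ 0 := by exact_mod_cast Nat.cast_add_one_ne_zero (R := ℂ) n
  have h2 : ((n.factorial : ℂ)) ≠ 0 := by
    exact_mod_cast Nat.cast_ne_zero.mpr (Nat.factorial_ne_zero n)
  rw [Nat.factorial_succ]
  push_cast
  field_simp

lemma coeff_exp' (n : ℕ) : coeff n (exp ℂ) = 1/(n.factorial : ℂ) := by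
  rw [coeff_exp, map_div₀, map_one, map_natCast]

lemma derivEm : (d⁄dX ℂ) (rescale (-1) (exp ℂ)) = - rescale (-1) (exp ℂ) := by
  ext n
  rw [coeff_derivative]
  simp only [coeff_rescale, coeff_exp', map_neg, LinearMap.neg_apply]
  linear_combination ((-1:ℂ))^(n+1) * factkey n

lemma derivU : (d⁄dX ℂ) oneSubExpNeg = rescale (-1) (exp ℂ) := by
  rw [oneSubExpNeg, map_sub, derivEm]
  simp

lemma derivExp : (d⁄dX ℂ) (exp ℂ) = exp ℂ := by
  ext n
  rw [coeff_derivative, coeff_exp', coeff_exp']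
  linear_combination factkey n

lemma derivExpX (x : ℂ) : (d⁄dX ℂ) (expX x) = C x * expX x := by
  ext n
  rw [coeff_derivative, coeff_C_mul]
  simp only [expX, coeff_rescale]
  have h := coeff_derivative (exp ℂ) n
  rw [derivExp] at h
  rw [show x^(n+1) = x * x^n from pow_succ' x n]
  rw [mul_assoc, mul_assoc, ← h]

lemma hlam' {lam : ℂ} (hlam : lam ≠ 1) : (1:ℂ) - lam ≠ 0 := sub_ne_zero.mpr (Ne.symm hlam)

lemma ccW (lam : ℂ) : constantCoeff (exp ℂ - C lam) = 1 - lam := by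
  simp [constantCoeff_exp]

lemma wInv {lam : ℂ} (hlam : lam ≠ 1) : (exp ℂ - C lam) * (exp ℂ - C lam)⁻¹ = 1 := by
  apply PowerSeries.mul_inv_cancel
  rw [ccW]; exact hlam' hlam

lemma gInvMul {lam : ℂ} (hlam : lam ≠ 1) :
    feBase lam * (C (1-lam)⁻¹ * (exp ℂ - C lam)) = 1 := by
  rw [feBase]
  calc C (1 - lam) * (exp ℂ - C lam)⁻¹ * (C (1-lam)⁻¹ * (exp ℂ - C lam))
      = (C (1 - lam) * C (1-lam)⁻¹) * ((exp ℂ - C lam) * (exp ℂ - C lam)⁻¹) := by ring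
    _ = 1 := by rw [wInv hlam, ← map_mul, mul_inv_cancel₀ (hlam' hlam), map_one, one_mul]

/-- feBase as a unit -/
noncomputable def gU {lam : ℂ} (hlam : lam ≠ 1) : (PowerSeries ℂ)ˣ :=
  ⟨feBase lam, C (1-lam)⁻¹ * (exp ℂ - C lam), gInvMul hlam,
   by rw [mul_comm]; exact gInvMul hlam⟩

lemma ccG {lam : ℂ} (hlam : lam ≠ 1) : constantCoeff (feBase lam) = 1 := by
  rw [feBase, map_mul, PowerSeries.constantCoeff_inv, ccW, constantCoeff_C]
  exact mul_inv_cancel₀ (hlam' hlam)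

lemma gne {lam : ℂ} (hlam : lam ≠ 1) : feBase lam ≠ 0 := by
  intro h
  have h2 := ccG hlam
  rw [h, map_zero] at h2
  exact one_ne_zero h2.symm

lemma gInv_eq {lam : ℂ} (hlam : lam ≠ 1) :
    (feBase lam)⁻¹ = C (1-lam)⁻¹ * (exp ℂ - C lam) := by
  have h1 : feBase lam * (feBase lam)⁻¹ = 1 :=
    PowerSeries.mul_inv_cancel _ (by rw [ccG hlam]; exact one_ne_zero)
  exact mul_left_cancel₀ (gne hlam) (h1.trans (gInvMul hlam).symm)

lemma zpowS_eq {lam : ℂ} (hlam : lam ≠ 1) (r : ℤ) :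
    zpowS (feBase lam) r = ((gU hlam ^ r : (PowerSeries ℂ)ˣ) : PowerSeries ℂ) := by
  obtain ⟨m, rfl | rfl⟩ := Int.eq_nat_or_neg r
  · rw [zpowS]
    simp [zpow_natCast, Units.val_pow_eq_pow_val, gU]
  · rw [zpowS, zpow_neg, zpow_natCast, ← inv_pow]
    simp [gU, gInv_eq hlam, Int.toNat_natCast]

lemma zpowS_succ {lam : ℂ} (hlam : lam ≠ 1) (r : ℤ) :
    zpowS (feBase lam) (r+1) = zpowS (feBase lam) r * feBase lam := by
  rw [zpowS_eq hlam, zpowS_eq hlam, zpow_add_one, Units.val_mul]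
  rfl

lemma derivW (lam : ℂ) : (d⁄dX ℂ) (exp ℂ - C lam) = exp ℂ := by
  rw [map_sub, derivExp, derivative_C, sub_zero]

lemma wDwInv {lam : ℂ} (hlam : lam ≠ 1) :
    (exp ℂ - C lam) * (d⁄dX ℂ) ((exp ℂ - C lam)⁻¹) = - exp ℂ * (exp ℂ - C lam)⁻¹ := by
  have h := congrArg (d⁄dX ℂ) (wInv hlam)
  rw [Derivation.leibniz, Derivation.map_one_eq_zero] at h
  simp only [smul_eq_mul] at h
  have h2 : (exp ℂ - C lam) * (d⁄dX ℂ) ((exp ℂ - C lam)⁻¹)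
      + (exp ℂ - C lam)⁻¹ * (d⁄dX ℂ) (exp ℂ - C lam) = 0 := h
  rw [derivW] at h2
  linear_combination h2

lemma wDg {lam : ℂ} (hlam : lam ≠ 1) :
    (exp ℂ - C lam) * (d⁄dX ℂ) (feBase lam) = - exp ℂ * feBase lam := by
  rw [feBase, Derivation.leibniz]
  simp only [smul_eq_mul, derivative_C, mul_zero, add_zero]
  linear_combination (C (1-lam)) * wDwInv hlam

lemma wDginv {lam : ℂ} (hlam : lam ≠ 1) :
    (exp ℂ - C lam) * (d⁄dX ℂ) (((gU hlam)⁻¹ : (PowerSeries ℂ)ˣ) : PowerSeries ℂ)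
      = exp ℂ * (((gU hlam)⁻¹ : (PowerSeries ℂ)ˣ) : PowerSeries ℂ) := by
  show (exp ℂ - C lam) * (d⁄dX ℂ) (C (1-lam)⁻¹ * (exp ℂ - C lam))
      = exp ℂ * (C (1-lam)⁻¹ * (exp ℂ - C lam))
  rw [Derivation.leibniz]
  simp only [smul_eq_mul, derivative_C, mul_zero, add_zero, derivW]
  ring

lemma wDgpow {lam : ℂ} (hlam : lam ≠ 1) (r : ℤ) :
    (exp ℂ - C lam) * (d⁄dX ℂ) ((gU hlam ^ r : (PowerSeries ℂ)ˣ) : PowerSeries ℂ)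
      = - C (r : ℂ) * exp ℂ * ((gU hlam ^ r : (PowerSeries ℂ)ˣ) : PowerSeries ℂ) := by
  induction r using Int.induction_on with
  | zero => simp
  | succ n ih =>
      have hval : ((gU hlam ^ ((n:ℤ)+1) : (PowerSeries ℂ)ˣ) : PowerSeries ℂ)
          = ((gU hlam ^ (n:ℤ) : (PowerSeries ℂ)ˣ) : PowerSeries ℂ) * feBase lam := by
        rw [zpow_add_one, Units.val_mul]; rfl
      rw [hval, Derivation.leibniz]
      simp only [smul_eq_mul]
      push_cast
      rw [map_add, map_one]
      linear_combination ((gU hlam ^ (n:ℤ) : (PowerSeries ℂ)ˣ) : PowerSeries ℂ) * wDg hlam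
        + feBase lam * ih
  | pred n ih =>
      have hval : ((gU hlam ^ (-(n:ℤ)-1) : (PowerSeries ℂ)ˣ) : PowerSeries ℂ)
          = ((gU hlam ^ (-(n:ℤ)) : (PowerSeries ℂ)ˣ) : PowerSeries ℂ)
            * (((gU hlam)⁻¹ : (PowerSeries ℂ)ˣ) : PowerSeries ℂ) := by
        rw [sub_eq_add_neg, zpow_add, zpow_neg_one, Units.val_mul]
      rw [hval, Derivation.leibniz]
      simp only [smul_eq_mul]
      push_cast
      rw [map_sub, map_one, map_neg]
      push_cast at ih
      rw [map_neg] at ih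
      linear_combination ((gU hlam ^ (-(n:ℤ)) : (PowerSeries ℂ)ˣ) : PowerSeries ℂ) * wDginv hlam
        + (((gU hlam)⁻¹ : (PowerSeries ℂ)ˣ) : PowerSeries ℂ) * ih

lemma wDzpow {lam : ℂ} (hlam : lam ≠ 1) (r : ℤ) :
    (exp ℂ - C lam) * (d⁄dX ℂ) (zpowS (feBase lam) r)
      = - C (r : ℂ) * exp ℂ * zpowS (feBase lam) r := by
  rw [zpowS_eq hlam]; exact wDgpow hlam r

lemma ccU : constantCoeff oneSubExpNeg = 0 := by
  rw [oneSubExpNeg, map_sub, map_one]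
  rw [← coeff_zero_eq_constantCoeff_apply, coeff_rescale, coeff_exp]
  norm_num

lemma coeff_u_pow_eq_zero {n m : ℕ} (h : n < m) : coeff n (oneSubExpNeg ^ m) = 0 := by
  have hd : (X : PowerSeries ℂ) ^ m ∣ oneSubExpNeg ^ m :=
    pow_dvd_pow_of_dvd (PowerSeries.X_dvd_iff.mpr ccU) m
  exact (PowerSeries.X_pow_dvd_iff.mp hd) n h

noncomputable def Qps (k : ℤ) (N : ℕ) : PowerSeries ℂ :=
  ∑ m ∈ Finset.Icc 1 N, C (((m:ℂ)^k)⁻¹) * oneSubExpNeg ^ m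

lemma coeff_polyLogC (k : ℤ) {n N : ℕ} (h : n ≤ N) :
    coeff n (polyLogC k) = coeff n (Qps k N) := by
  rw [polyLogC, coeff_mk, Qps, map_sum]
  rw [Finset.sum_subset (Finset.Icc_subset_Icc_right h)]
  · apply Finset.sum_congr rfl
    intro m _
    rw [coeff_C_mul, mul_comm]
  · intro m hm hm'
    simp only [Finset.mem_Icc] at hm hm'
    have h2 : n < m := by omega
    rw [coeff_u_pow_eq_zero h2, zero_mul]

lemma uDQ (k : ℤ) (N : ℕ) :
    oneSubExpNeg * (d⁄dX ℂ) (Qps k N) = rescale (-1) (exp ℂ) * Qps (k-1) N := by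
  rw [Qps, Qps, map_sum, Finset.mul_sum, Finset.mul_sum]
  apply Finset.sum_congr rfl
  intro m hm
  simp only [Finset.mem_Icc] at hm
  rw [Derivation.leibniz, derivative_C, smul_zero, add_zero, smul_eq_mul,
    Derivation.leibniz_pow, derivU]
  simp only [smul_eq_mul, nsmul_eq_mul]
  have hpow : oneSubExpNeg * oneSubExpNeg ^ (m - 1) = oneSubExpNeg ^ m := by
    rw [← pow_succ']
    congr 1
    omega
  have hm0 : (m:ℂ) ≠ 0 := Nat.cast_ne_zero.mpr (by omega)
  have hc : ((m:ℂ)^k)⁻¹ * (m:ℂ) = ((m:ℂ)^(k-1))⁻¹ := by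
    rw [← zpow_neg, ← zpow_neg]
    have h2 : ((m:ℂ))^(-(k-1)) = (m:ℂ)^(-k) * (m:ℂ)^(1:ℤ) := by
      rw [← zpow_add₀ hm0]; ring_nf
    rw [h2, zpow_one]
  have hcC : C (((m:ℂ)^k)⁻¹) * (m : PowerSeries ℂ) = C (((m:ℂ)^(k-1))⁻¹) := by
    rw [← map_natCast (C : ℂ →+* PowerSeries ℂ) m, ← map_mul, hc]
  linear_combination (rescale (-1) (exp ℂ) * oneSubExpNeg ^ (m-1) * oneSubExpNeg) * hcC
    + (C (((m:ℂ)^(k-1))⁻¹) * rescale (-1) (exp ℂ)) * hpow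

lemma uDP (k : ℤ) :
    oneSubExpNeg * (d⁄dX ℂ) (polyLogC k) = rescale (-1) (exp ℂ) * polyLogC (k-1) := by
  ext n
  rw [coeff_mul, coeff_mul]
  have hL : ∀ p ∈ antidiagonal n,
      coeff p.1 oneSubExpNeg * coeff p.2 ((d⁄dX ℂ) (polyLogC k))
      = coeff p.1 oneSubExpNeg * coeff p.2 ((d⁄dX ℂ) (Qps k (n+1))) := by
    intro p hp
    rw [HasAntidiagonal.mem_antidiagonal] at hp
    rw [coeff_derivative, coeff_derivative, coeff_polyLogC k (by omega : p.2 + 1 ≤ n+1)]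
  have hR : ∀ p ∈ antidiagonal n,
      coeff p.1 (rescale (-1) (exp ℂ)) * coeff p.2 (polyLogC (k-1))
      = coeff p.1 (rescale (-1) (exp ℂ)) * coeff p.2 (Qps (k-1) (n+1)) := by
    intro p hp
    rw [HasAntidiagonal.mem_antidiagonal] at hp
    rw [coeff_polyLogC (k-1) (by omega : p.2 ≤ n+1)]
  rw [Finset.sum_congr rfl hL, Finset.sum_congr rfl hR, ← coeff_mul, ← coeff_mul, uDQ]

lemma coeff_GF (f : ℕ → ℂ) (n : ℕ) : coeff n (GF f) = f n / n.factorial := by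
  rw [GF, coeff_mk]

lemma une : oneSubExpNeg ≠ 0 := by
  intro h
  have h2 : coeff 1 oneSubExpNeg = 1 := by
    rw [oneSubExpNeg, map_sub, coeff_rescale, coeff_exp']
    simp [coeff_one]
  rw [h, map_zero] at h2
  exact one_ne_zero h2.symm

lemma wne {lam : ℂ} (hlam : lam ≠ 1) : exp ℂ - C lam ≠ 0 := by
  intro h
  have h2 := ccW lam
  rw [h, map_zero] at h2
  exact (hlam' hlam) h2.symm

lemma expSubOne_ne : exp ℂ - 1 ≠ 0 := by
  intro h
  have h2 : coeff 1 (exp ℂ - 1) = 1 := by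
    rw [map_sub, coeff_exp']
    simp [coeff_one]
  rw [h, map_zero] at h2
  exact one_ne_zero h2.symm

theorem stmt6 (lam : ℂ) (hlam : lam ≠ 1) (r k : ℤ) (T T' T'' : ℕ → ℂ → ℂ)
    (hT : ∀ x : ℂ, oneSubExpNeg * GF (fun n => T n x)
        = zpowS (feBase lam) (r) * polyLogC (k) * expX x)
    (hT' : ∀ x : ℂ, oneSubExpNeg * GF (fun n => T' n x)
        = zpowS (feBase lam) (r + 1) * polyLogC (k) * expX x)
    (hT'' : ∀ x : ℂ, oneSubExpNeg * GF (fun n => T'' n x)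
        = zpowS (feBase lam) (r) * polyLogC (k - 1) * expX x) :
    ∀ (n : ℕ) (x : ℂ),
      T (n + 1) x = (x - (r : ℂ)) * T n x - ((r : ℂ) * lam / (1 - lam)) * T' n x -
        (1 / ((n : ℂ) + 1)) * ∑ l ∈ range (n + 2),
          ((n + 1).choose l : ℂ) * ((bernoulli l : ℚ) : ℂ) * (T (n + 1 - l) x - T'' (n + 1 - l) x) := by
  intro n x
  -- abbreviations
  set u : PowerSeries ℂ := oneSubExpNeg with hu_def
  set Em : PowerSeries ℂ := rescale (-1) (exp ℂ) with hEm_def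
  set w : PowerSeries ℂ := exp ℂ - C lam with hw_def
  set A : PowerSeries ℂ := GF (fun n => T n x) with hA_def
  set A' : PowerSeries ℂ := GF (fun n => T' n x) with hA'_def
  set A'' : PowerSeries ℂ := GF (fun n => T'' n x) with hA''_def
  have hA : u * A = zpowS (feBase lam) r * polyLogC k * expX x := hT x
  have hA' : u * A' = zpowS (feBase lam) (r+1) * polyLogC k * expX x := hT' x
  have hA'' : u * A'' = zpowS (feBase lam) r * polyLogC (k-1) * expX x := hT'' x
  -- derivative of hA
  have hdA : u * (u * (d⁄dX ℂ) A)
      = u * (d⁄dX ℂ) (zpowS (feBase lam) r * polyLogC k * expX x) - Em * (u * A) := by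
    have hd := congrArg (d⁄dX ℂ) hA
    rw [Derivation.leibniz] at hd
    simp only [smul_eq_mul] at hd
    rw [derivU] at hd
    linear_combination u * hd
  -- derivative of the product F
  have hDF : w * (u * (d⁄dX ℂ) (zpowS (feBase lam) r * polyLogC k * expX x))
      = - C (r:ℂ) * exp ℂ * (u * (zpowS (feBase lam) r * polyLogC k * expX x))
        + Em * w * (zpowS (feBase lam) r * polyLogC (k-1) * expX x)
        + C x * (w * (u * (zpowS (feBase lam) r * polyLogC k * expX x))) := by
    rw [Derivation.leibniz, Derivation.leibniz]
    simp only [smul_eq_mul]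
    rw [derivExpX x]
    linear_combination (u * polyLogC k * expX x) * wDzpow hlam r
      + (w * zpowS (feBase lam) r * expX x) * uDP k
  -- combined derivative relation
  have H45 : w * (u * u * (d⁄dX ℂ) A)
      = - (Em * w * (u * A)) - C (r:ℂ) * exp ℂ * (u * u * A)
        + Em * w * (u * A'') + C x * (w * (u * u * A)) := by
    linear_combination w * hdA + hDF + (C (r:ℂ) * exp ℂ * u) * hA
      - (Em * w) * hA'' - (C x * w * u) * hA
  -- relation between A' and A
  have hwg : w * feBase lam = C (1 - lam) := by
    rw [feBase]
    calc (exp ℂ - C lam) * (C (1 - lam) * (exp ℂ - C lam)⁻¹)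
        = C (1-lam) * ((exp ℂ - C lam) * (exp ℂ - C lam)⁻¹) := by ring
      _ = C (1 - lam) := by rw [wInv hlam, mul_one]
  have H6 : w * (u * A') = C (1 - lam) * (u * A) := by
    linear_combination w * hA' + (w * polyLogC k * expX x) * (zpowS_succ hlam r)
      + (zpowS (feBase lam) r * polyLogC k * expX x) * hwg - (C (1-lam)) * hA
  have H7 : Em * (exp ℂ - 1) = u := by
    rw [hu_def, oneSubExpNeg, hEm_def]
    linear_combination EmE
  have H8 : C ((r:ℂ) * lam / (1 - lam)) * C (1 - lam) = C (r:ℂ) * C lam := by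
    rw [← map_mul, ← map_mul]
    congr 1
    exact div_mul_cancel₀ _ (hlam' hlam)
  have H9 : C (x - (r:ℂ)) = C x - C (r:ℂ) := map_sub _ _ _
  have Bid : bernoulliPowerSeries ℂ * (exp ℂ - 1) = X := bernoulliPowerSeries_mul_exp_sub_one ℂ
  -- the main power series identity
  have M : (X : PowerSeries ℂ) * (d⁄dX ℂ) A
      = C (x - (r:ℂ)) * X * A - C ((r:ℂ) * lam / (1 - lam)) * X * A'
        - bernoulliPowerSeries ℂ * (A - A'') := by
    apply mul_right_cancel₀
      (b := (exp ℂ - 1) * (u * u * w))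
      (mul_ne_zero expSubOne_ne (mul_ne_zero (mul_ne_zero une une) (wne hlam)))
    linear_combination (X * (exp ℂ - 1)) * H45
      + (C ((r:ℂ) * lam / (1 - lam)) * X * (exp ℂ - 1) * u) * H6
      + (X * (exp ℂ - 1) * u^2 * A) * H8
      - (X * u * w * (A - A'')) * H7
      + ((A - A'') * u * u * w) * Bid
      - (X * A * (exp ℂ - 1) * u * u * w) * H9
  -- extract the (n+1)-st coefficient
  have hco := congrArg (coeff (n+1)) M
  rw [coeff_succ_X_mul, coeff_derivative] at hco
  rw [mul_assoc (C (x - (r:ℂ))), mul_assoc (C ((r:ℂ) * lam / (1 - lam)))] at hco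
  rw [map_sub, map_sub, coeff_C_mul, coeff_C_mul, coeff_succ_X_mul, coeff_succ_X_mul] at hco
  rw [hA_def, hA'_def, hA''_def] at hco
  rw [coeff_GF, coeff_GF, coeff_GF] at hco
  -- the Bernoulli convolution sum
  have hB : coeff (n+1) (bernoulliPowerSeries ℂ * (GF (fun n => T n x) - GF (fun n => T'' n x)))
      = ∑ l ∈ range (n+2), ((bernoulli l : ℚ) : ℂ) / (l.factorial : ℂ)
          * ((T (n+1-l) x - T'' (n+1-l) x) / ((n+1-l).factorial : ℂ)) := by
    rw [coeff_mul]
    rw [Finset.Nat.sum_antidiagonal_eq_sum_range_succ_mk]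
    apply Finset.sum_congr rfl
    intro l hl
    rw [bernoulliPowerSeries, coeff_mk, map_sub, coeff_GF, coeff_GF]
    rw [eq_ratCast (algebraMap ℚ ℂ), Rat.cast_div, Rat.cast_natCast]
    rw [div_sub_div_same]
  rw [hB] at hco
  -- convert the Bernoulli sum to the binomial form
  have hn1 : ((n:ℂ)+1) ≠ 0 := by exact_mod_cast Nat.cast_add_one_ne_zero (R := ℂ) n
  have hfn : ((n.factorial : ℂ)) ≠ 0 := by
    exact_mod_cast Nat.cast_ne_zero.mpr (Nat.factorial_ne_zero n)
  have Ssum : ∑ l ∈ range (n+2), ((bernoulli l : ℚ) : ℂ) / (l.factorial : ℂ)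
          * ((T (n+1-l) x - T'' (n+1-l) x) / ((n+1-l).factorial : ℂ))
      = (1 / ((n:ℂ)+1)) * (∑ l ∈ range (n+2),
          ((n + 1).choose l : ℂ) * ((bernoulli l : ℚ) : ℂ) * (T (n + 1 - l) x - T'' (n + 1 - l) x))
        / (n.factorial : ℂ) := by
    rw [mul_div_assoc, Finset.sum_div, Finset.mul_sum]
    apply Finset.sum_congr rfl
    intro l hl
    rw [Finset.mem_range] at hl
    have hl' : l ≤ n + 1 := by omega
    have hcc : (((n+1).choose l : ℂ)) * (l.factorial : ℂ) * (((n+1-l).factorial : ℂ))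
        = ((n:ℂ)+1) * (n.factorial : ℂ) := by
      have h0 := Nat.choose_mul_factorial_mul_factorial hl'
      have h1 : (((n+1).choose l * l.factorial * (n+1-l).factorial : ℕ) : ℂ)
          = (((n+1).factorial : ℕ) : ℂ) := by
        exact congrArg (fun t : ℕ => (t : ℂ)) h0
      push_cast [Nat.factorial_succ] at h1
      push_cast
      linear_combination h1
    have hlf : ((l.factorial : ℂ)) ≠ 0 := by
      exact_mod_cast Nat.cast_ne_zero.mpr (Nat.factorial_ne_zero l)
    have hmf : (((n+1-l).factorial : ℂ)) ≠ 0 := by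
      exact_mod_cast Nat.cast_ne_zero.mpr (Nat.factorial_ne_zero (n+1-l))
    field_simp
    linear_combination (-(((bernoulli l : ℚ) : ℂ) * (T (n+1-l) x - T'' (n+1-l) x))) * hcc
  rw [Ssum] at hco
  -- finish with scalar algebra
  have hfs : (((n+1).factorial : ℂ)) = ((n:ℂ)+1) * (n.factorial : ℂ) := by
    rw [Nat.factorial_succ]; push_cast; ring
  rw [hfs] at hco
  have h2 : T (n+1) x / (n.factorial : ℂ)
      = ((x - (r:ℂ)) * T n x - (r:ℂ)*lam/(1-lam) * T' n x - 1/((n:ℂ)+1) * (∑ l ∈ range (n + 2),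
          ((n + 1).choose l : ℂ) * ((bernoulli l : ℚ) : ℂ) * (T (n + 1 - l) x - T'' (n + 1 - l) x)))
        / (n.factorial : ℂ) := by
    calc T (n+1) x / (n.factorial : ℂ)
        = T (n+1) x / (((n:ℂ)+1) * (n.factorial : ℂ)) * ((n:ℂ)+1) := by
          rw [div_mul_eq_mul_div, div_eq_div_iff hfn (mul_ne_zero hn1 hfn)]
          ring
      _ = (x - (r:ℂ)) * (T n x / (n.factorial:ℂ)) - (r:ℂ)*lam/(1-lam) * (T' n x / (n.factorial:ℂ))
            - (1/((n:ℂ)+1) * (∑ l ∈ range (n + 2),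
          ((n + 1).choose l : ℂ) * ((bernoulli l : ℚ) : ℂ) * (T (n + 1 - l) x - T'' (n + 1 - l) x))
              / (n.factorial:ℂ)) := hco
      _ = ((x - (r:ℂ)) * T n x - (r:ℂ)*lam/(1-lam) * T' n x - 1/((n:ℂ)+1) * (∑ l ∈ range (n + 2),
          ((n + 1).choose l : ℂ) * ((bernoulli l : ℚ) : ℂ) * (T (n + 1 - l) x - T'' (n + 1 - l) x)))
            / (n.factorial : ℂ) := by ring
  have h3 := congrArg (fun z => z * (n.factorial : ℂ)) h2
  simpa [div_mul_cancel₀, hfn] using h3
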